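/- In the real Lie algebra ℂ[z] of polynomial holomorphic vector fields on ℂ, with bracket [f,g] = f g′ − g f′, the subspace of polynomials of degree at most 2 (a real Lie algebra isomorphic to sl(2,ℂ) viewed as a real Lie algebra, i.e. to so(3,1)) is a maximal Lie subalgebra: it is a proper real Lie subalgebra, and every real Lie subalgebra of ℂ[z] strictly containing it equals ℂ[z]. -/

import Mathlib

open Polynomial

private lemma deg2_form (a b c : ℂ) : (C a + C b * X + C c * X ^ 2).degree ≤ 2 := by
  compute_degree

private lemma rep2 (f : ℂ[X]) (hf : f.degree ≤ 2) :
    f = C (f.coeff 0) + C (f.coeff 1) * X + C (f.coeff 2) * X ^ 2 := by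
  ext n
  match n with
  | 0 => simp
  | 1 => simp
  | 2 => simp [coeff_X_pow]
  | (k+3) =>
    rw [f.coeff_eq_zero_of_degree_lt (lt_of_le_of_lt hf (by exact_mod_cast by omega))]
    simp [coeff_X_pow, coeff_X]

theorem complex_degree_le_two_maximal :
    (∀ f g : Polynomial ℂ, f.degree ≤ 2 → g.degree ≤ 2 →
      (f * Polynomial.derivative g - g * Polynomial.derivative f).degree ≤ 2) ∧
    (∃ f : Polynomial ℂ, ¬ f.degree ≤ 2) ∧
    (∀ S : Submodule ℝ (Polynomial ℂ),
      (∀ f ∈ S, ∀ g ∈ S,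
        f * Polynomial.derivative g - g * Polynomial.derivative f ∈ S) →
      (∀ f : Polynomial ℂ, f.degree ≤ 2 → f ∈ S) →
      (∃ f ∈ S, ¬ f.degree ≤ 2) →
      S = ⊤) := by
  refine ⟨?_, ?_, ?_⟩
  · -- closure under bracket
    intro f g hf hg
    rw [rep2 f hf, rep2 g hg]
    set a := f.coeff 0; set b := f.coeff 1; set c := f.coeff 2
    set d := g.coeff 0; set e := g.coeff 1; set k := g.coeff 2
    have : (C a + C b * X + C c * X ^ 2) * derivative (C d + C e * X + C k * X ^ 2)
        - (C d + C e * X + C k * X ^ 2) * derivative (C a + C b * X + C c * X ^ 2)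
        = C (a * e - d * b) + C (2 * (a * k - d * c)) * X + C (b * k - e * c) * X ^ 2 := by
      simp only [derivative_add, derivative_C, derivative_C_mul, derivative_X,
        derivative_X_pow, Nat.cast_ofNat, map_sub, map_mul, map_ofNat]
      ring
    rw [this]
    exact deg2_form _ _ _
  · -- properness
    refine ⟨X ^ 3, ?_⟩
    rw [degree_X_pow]
    exact of_decide_eq_false rfl
  · -- maximality
    intro S hS hdeg2 ⟨f, hfS, hfdeg⟩
    -- derivative closure
    have hder : ∀ h ∈ S, derivative h ∈ S := by
      intro h hh
      have := hS 1 (hdeg2 1 (by simp)) h hh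
      simpa using this
    have hiter : ∀ k, derivative^[k] f ∈ S := by
      intro k
      induction k with
      | zero => simpa using hfS
      | succ k ih => rw [Function.iterate_succ_apply']; exact hder _ ih
    -- f has natDegree ≥ 3
    have hf0 : f ≠ 0 := by rintro rfl; exact hfdeg (by simp)
    have hn3 : 3 ≤ f.natDegree := by
      by_contra h
      push_neg at h
      exact hfdeg (degree_le_natDegree.trans
        (by exact_mod_cast (by omega : f.natDegree ≤ 2)))
    set n := f.natDegree with hn
    -- iterated derivative degree
    have hnd : ∀ k, k + 3 ≤ n → (derivative^[k] f).natDegree = n - k := by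
      intro k
      induction k with
      | zero => simp [hn]
      | succ k ih =>
        intro hk
        rw [Function.iterate_succ_apply']
        have h1 : (derivative^[k] f).natDegree = n - k := ih (by omega)
        have hpos : 0 < (derivative^[k] f).natDegree := by omega
        have := degree_derivative_eq (derivative^[k] f) hpos
        have := natDegree_eq_of_degree_eq_some this
        omega
    set g := derivative^[n - 3] f with hg
    have hgdeg : g.natDegree = 3 := by rw [hg, hnd (n - 3) (by omega)]; omega
    have hgS : g ∈ S := hiter _
    have hg0 : g ≠ 0 := fun h => by simp [h] at hgdeg
    set a := g.leadingCoeff with ha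
    have ha0 : a ≠ 0 := leadingCoeff_ne_zero.mpr hg0
    -- C a * X ^ 3 ∈ S
    have hq : C a * X ^ 3 ∈ S := by
      have hdq : (C a * X ^ 3).degree = 3 := by
        rw [degree_C_mul_X_pow 3 ha0]; decide
      have hdg : g.degree = 3 := by
        rw [degree_eq_natDegree hg0, hgdeg]; simp
      have hlt : (g - C a * X ^ 3).degree < 3 := by
        rw [← hdg]
        exact degree_sub_lt (by rw [hdq, hdg]) hg0 (by rw [leadingCoeff_C_mul_X_pow])
      have hle : (g - C a * X ^ 3).degree ≤ 2 := by
        rcases hd : (g - C a * X ^ 3).degree with _ | m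
        · rw [hd]; exact bot_le
        · rw [hd] at hlt
          rw [hd, show (2 : WithBot ℕ) = ((2 : ℕ) : WithBot ℕ) from rfl]
          rw [show (3 : WithBot ℕ) = ((3 : ℕ) : WithBot ℕ) from rfl] at hlt
          exact WithBot.coe_le_coe.mpr (by have := WithBot.coe_lt_coe.mp hlt; omega)
      have := S.sub_mem hgS (hdeg2 _ hle)
      simpa using this
    -- all complex multiples of X ^ 3
    have h3 : ∀ c : ℂ, C c * X ^ 3 ∈ S := by
      intro c
      have hx : C (c / (2 * a)) * X ∈ S := hdeg2 _ (by compute_degree!)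
      have hmem := hS _ hx _ hq
      have heq : C (c / (2 * a)) * X * derivative (C a * X ^ 3)
          - C a * X ^ 3 * derivative (C (c / (2 * a)) * X) = C c * X ^ 3 := by
        rw [derivative_C_mul, derivative_C_mul, derivative_X_pow, derivative_X]
        norm_num
        trans (C (c / (2 * a)) * C a * C (3 : ℂ) - C a * C (c / (2 * a))) * X ^ 3
        · ring
        · simp only [← C_mul, ← C_sub]
          congr 1
          field_simp
          ring
      rwa [heq] at hmem
    -- induction upward
    have hmon : ∀ k, 3 ≤ k → ∀ c : ℂ, C c * X ^ k ∈ S := by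
      intro k hk
      induction k with
      | zero => omega
      | succ k ih =>
        intro c
        rcases Nat.lt_or_ge k 3 with h | h
        · interval_cases k
          · omega
          · omega
          · exact h3 c
        · have hck : ((k : ℂ) - 2) ≠ 0 := by
            intro hc
            have : (k : ℂ) = 2 := by linear_combination hc
            have : k = 2 := by exact_mod_cast this
            omega
          have hk2 : C (c / ((k : ℂ) - 2)) * X ^ k ∈ S := ih (by omega) _
          have hx2 : (X ^ 2 : ℂ[X]) ∈ S := hdeg2 _ (by compute_degree!)
          have hmem := hS _ hx2 _ hk2
          have heq : (X ^ 2 : ℂ[X]) * derivative (C (c / ((k : ℂ) - 2)) * X ^ k)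
              - C (c / ((k : ℂ) - 2)) * X ^ k * derivative (X ^ 2)
              = C c * X ^ (k + 1) := by
            rw [derivative_C_mul, derivative_X_pow, derivative_X_pow]
            have hxp : (X : ℂ[X]) ^ 2 * X ^ (k - 1) = X ^ (k + 1) := by
              rw [← pow_add]; congr 1; omega
            have hxp2 : (X : ℂ[X]) ^ k * X ^ (2 - 1) = X ^ (k + 1) := by
              rw [← pow_add]
            have key : C (c / ((k : ℂ) - 2)) * C ((k : ℂ)) * (X ^ 2 * X ^ (k - 1))
                - C (c / ((k : ℂ) - 2)) * C (((2 : ℕ) : ℂ)) * (X ^ k * X ^ (2 - 1))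
                = C c * X ^ (k + 1) := by
              rw [hxp, hxp2, ← C_mul, ← C_mul, ← sub_mul, ← C_sub]
              congr 1
              push_cast
              field_simp
            rw [← key]
            ring
          rwa [heq] at hmem
    -- conclude S = ⊤
    rw [eq_top_iff]
    intro p hp
    clear hp
    induction p using Polynomial.induction_on' with
    | add p q hp hq => exact S.add_mem hp hq
    | monomial m c =>
      rcases Nat.lt_or_ge m 3 with h | h
      · refine hdeg2 _ ((degree_monomial_le m c).trans ?_)
        exact_mod_cast (by omega : m ≤ 2)
      · rw [← C_mul_X_pow_eq_monomial]
        exact hmon m h c
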